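/- Assume Dickson's conjecture. Let a be a positive integer and b an integer such that both b and 2b+1 are coprime to a. Then the arithmetic progression with common difference a and first term b contains infinitely many Sophie Germain primes, i.e. there are infinitely many positive integers t such that at + b is prime and 2(at + b) + 1 is prime. -/

import Mathlib

lemma germain_aux {p : ℕ} [Fact p.Prime] (a b : ℤ) (hA : (a : ZMod p) ≠ 0) (c : ZMod p)
    (hc : c * (2 * c + 1) ≠ 0) :
    ∃ t : ℤ, ¬ ((p : ℤ) ∣ (a * t + b) * (2 * a * t + (2 * b + 1))) := by
  refine ⟨(((c - (b : ZMod p)) * (a : ZMod p)⁻¹).val : ℤ), ?_⟩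
  rw [← ZMod.intCast_zmod_eq_zero_iff_dvd]
  push_cast
  simp only [ZMod.natCast_val, ZMod.intCast_cast, ZMod.cast_id]
  have hAT : (a : ZMod p) * ((c - (b : ZMod p)) * (a : ZMod p)⁻¹) = c - (b : ZMod p) := by
    rw [mul_comm ((c - (b : ZMod p))) _, ← mul_assoc, mul_inv_cancel₀ hA, one_mul]
  rw [show ((a : ZMod p) * ((c - (b : ZMod p)) * (a : ZMod p)⁻¹) + (b : ZMod p)) *
      (2 * (a : ZMod p) * ((c - (b : ZMod p)) * (a : ZMod p)⁻¹) + (2 * (b : ZMod p) + 1))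
      = c * (2 * c + 1) from by rw [mul_assoc 2, hAT]; ring]
  exact hc


/-- Dickson's conjecture: given finitely many linear polynomials `t ↦ a i * t + b i`
with integer coefficients and positive leading coefficients, such that no prime divides
the value of their product at every integer, there are infinitely many positive integers
`t` at which all of them take prime values. -/
def DicksonConjecture : Prop :=
  ∀ (s : ℕ) (a b : Fin s → ℤ),
    (∀ i, 0 < a i) →
    (∀ p : ℕ, p.Prime → ∃ t : ℤ, ¬ ((p : ℤ) ∣ ∏ i, (a i * t + b i))) →
    {t : ℕ | 0 < t ∧ ∀ i, ∃ q : ℕ, q.Prime ∧ a i * (t : ℤ) + b i = q}.Infinite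

/-- Assuming Dickson's conjecture, if `a > 0` and both `b` and `2b+1` are coprime to `a`,
then there are infinitely many positive integers `t` such that `a*t + b` is a (Sophie
Germain) prime, i.e. both `a*t + b` and `2*(a*t + b) + 1` are prime. -/
theorem germain_primes_in_ap (hD : DicksonConjecture)
    (a : ℤ) (ha : 0 < a) (b : ℤ) (hb : IsCoprime b a) (hb' : IsCoprime (2 * b + 1) a) :
    {t : ℕ | 0 < t ∧
      (∃ p : ℕ, p.Prime ∧ a * (t : ℤ) + b = p) ∧
      (∃ q : ℕ, q.Prime ∧ 2 * (a * (t : ℤ) + b) + 1 = q)}.Infinite := by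
  have key := hD 2 ![a, 2 * a] ![b, 2 * b + 1] (by
      intro i; fin_cases i
      · simpa using ha
      · simpa using by linarith) (by
      intro p hp
      haveI := Fact.mk hp
      simp only [Fin.prod_univ_two, Matrix.cons_val_zero, Matrix.cons_val_one,
        Matrix.head_cons]
      by_cases hpa : ((p : ℤ) ∣ a)
      · refine ⟨0, ?_⟩
        simp only [mul_zero, zero_add, add_zero]
        intro hdvd
        have hpz : Prime (p : ℤ) := Nat.prime_iff_prime_int.mp hp
        rcases hpz.dvd_mul.mp hdvd with h | h
        · exact hpz.not_unit (hb.isUnit_of_dvd' h hpa)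
        · exact hpz.not_unit (hb'.isUnit_of_dvd' h hpa)
      · have hA : (a : ZMod p) ≠ 0 := by
          simpa [ZMod.intCast_zmod_eq_zero_iff_dvd] using hpa
        by_cases h3 : (3 : ZMod p) = 0
        · refine germain_aux a b hA 2 ?_
          rw [show (2 : ZMod p) * (2 * 2 + 1) = 1 by linear_combination 3 * h3]
          exact one_ne_zero
        · refine germain_aux a b hA 1 ?_
          rw [show (1 : ZMod p) * (2 * 1 + 1) = 3 by norm_num]
          exact h3)
  refine key.mono ?_
  rintro t ⟨ht, h⟩
  refine ⟨ht, ?_, ?_⟩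
  · obtain ⟨q, hq, he⟩ := h 0
    exact ⟨q, hq, by simpa using he⟩
  · obtain ⟨q, hq, he⟩ := h 1
    refine ⟨q, hq, ?_⟩
    simp only [Matrix.cons_val_one, Matrix.head_cons, Matrix.cons_val_zero] at he
    linarith
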